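/- Let K be a nondegenerate triangle in ℝ². Then the sum of the three principal 2×2 minors of the local Raviart–Thomas mass matrix, namely R = Σ_{i=1}^{3} [ (G_K)_{ii} (G_K)_{i+1,i+1} − ((G_K)_{i,i+1})² ] with indices taken cyclically modulo 3, equals 1/12 + (9/4)·(ρ_K²/|K|)². -/

import Mathlib

open MeasureTheory Real RealInnerProductSpace



private lemma int_poly4 (c0 c1 c2 c3 c4 u : ℝ) :
    ∫ s in (0:ℝ)..u, (c0 + c1*s + c2*s^2 + c3*s^3 + c4*s^4) =
      c0*u + c1/2*u^2 + c2/3*u^3 + c3/4*u^4 + c4/5*u^5 := by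
  have h : ∀ s ∈ Set.uIcc (0:ℝ) u, HasDerivAt
      (fun x : ℝ => c0*x^1 + c1/2*x^2 + c2/3*x^3 + c3/4*x^4 + c4/5*x^5)
      (c0 + c1*s + c2*s^2 + c3*s^3 + c4*s^4) s := by
    intro s _
    have h1 := (hasDerivAt_pow 1 s).const_mul c0
    have h2 := (hasDerivAt_pow 2 s).const_mul (c1/2)
    have h3 := (hasDerivAt_pow 3 s).const_mul (c2/3)
    have h4 := (hasDerivAt_pow 4 s).const_mul (c3/4)
    have h5 := (hasDerivAt_pow 5 s).const_mul (c4/5)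
    refine ((((h1.add h2).add h3).add h4).add h5).congr_deriv ?_
    push_cast
    ring
  rw [intervalIntegral.integral_eq_sub_of_hasDerivAt h
    ((Continuous.intervalIntegrable (by continuity) _ _))]
  ring

private def Tri : Set (ℝ × ℝ) := {z | 0 ≤ z.1 ∧ 0 ≤ z.2 ∧ z.1 + z.2 ≤ 1}

private lemma measurableSet_Tri : MeasurableSet Tri := by
  have h1 : MeasurableSet {z : ℝ × ℝ | 0 ≤ z.1} :=
    measurableSet_le measurable_const measurable_fst
  have h2 : MeasurableSet {z : ℝ × ℝ | 0 ≤ z.2} :=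
    measurableSet_le measurable_const measurable_snd
  have h3 : MeasurableSet {z : ℝ × ℝ | z.1 + z.2 ≤ 1} :=
    measurableSet_le (measurable_fst.add measurable_snd) measurable_const
  exact (h1.inter (h2.inter h3))

private lemma isCompact_Tri : IsCompact Tri := by
  have hclosed : IsClosed Tri := by
    have h1 : IsClosed {z : ℝ × ℝ | 0 ≤ z.1} := isClosed_le continuous_const continuous_fst
    have h2 : IsClosed {z : ℝ × ℝ | 0 ≤ z.2} := isClosed_le continuous_const continuous_snd
    have h3 : IsClosed {z : ℝ × ℝ | z.1 + z.2 ≤ 1} :=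
      isClosed_le (continuous_fst.add continuous_snd) continuous_const
    exact h1.inter (h2.inter h3)
  refine IsCompact.of_isClosed_subset (isCompact_Icc (a := ((0:ℝ),(0:ℝ))) (b := (1,1))) hclosed ?_
  rintro ⟨x, y⟩ ⟨hx, hy, hxy⟩
  constructor
  · exact ⟨hx, hy⟩
  · exact ⟨by dsimp at *; linarith, by dsimp at *; linarith⟩

private lemma tri_fubini (g : ℝ → ℝ → ℝ) (hg : Continuous fun z : ℝ × ℝ => g z.1 z.2) :
    ∫ z in Tri, g z.1 z.2 = ∫ s in Set.Icc (0:ℝ) 1, ∫ t in Set.Icc (0:ℝ) (1 - s), g s t := by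
  have hm := measurableSet_Tri
  have hint : IntegrableOn (fun z : ℝ × ℝ => g z.1 z.2) Tri := hg.continuousOn.integrableOn_compact isCompact_Tri
  rw [← integral_indicator hm]
  rw [show (volume : Measure (ℝ × ℝ)) = (volume : Measure ℝ).prod volume from Measure.volume_eq_prod ℝ ℝ]
  rw [integral_prod _ (by
    rw [integrable_indicator_iff hm]
    rwa [← Measure.volume_eq_prod ℝ ℝ])]
  rw [← integral_indicator (measurableSet_Icc (a := (0:ℝ)) (b := 1))]
  refine integral_congr_ae (Filter.Eventually.of_forall fun s => ?_)
  by_cases hs : s ∈ Set.Icc (0:ℝ) 1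
  · rw [Set.indicator_of_mem hs, ← integral_indicator (measurableSet_Icc (a := (0:ℝ)) (b := 1-s))]
    refine integral_congr_ae (Filter.Eventually.of_forall fun t => ?_)
    dsimp only
    by_cases ht : t ∈ Set.Icc (0:ℝ) (1-s)
    · rw [Set.indicator_of_mem ht, Set.indicator_of_mem
        (show (s, t) ∈ Tri from ⟨hs.1, ht.1, by have := ht.2; dsimp at this ⊢; linarith⟩)]
    · rw [Set.indicator_of_notMem ht, Set.indicator_of_notMem
        (show (s, t) ∉ Tri from fun hmem =>
          ht ⟨hmem.2.1, by have := hmem.2.2; dsimp at this; linarith⟩)]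
  · rw [Set.indicator_of_notMem hs]
    have hz : ∀ t : ℝ, Tri.indicator (fun z : ℝ × ℝ => g z.1 z.2) (s, t) = 0 := by
      intro t
      apply Set.indicator_of_notMem
      intro hmem
      exact hs ⟨hmem.1, by have h1 := hmem.2.1; have h2 := hmem.2.2; dsimp at h1 h2 ⊢; linarith⟩
    simp [hz]

private lemma tri_moment (a b c d e f : ℝ) :
    ∫ z in Tri, (a + b*z.1 + c*z.2 + d*z.1^2 + e*z.2^2 + f*(z.1*z.2)) =
      a/2 + (b+c)/6 + (d+e)/12 + f/24 := by
  rw [tri_fubini (fun s t => a + b*s + c*t + d*s^2 + e*t^2 + f*(s*t)) (by fun_prop)]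
  have key : ∀ s ∈ Set.Icc (0:ℝ) 1,
      (∫ t in Set.Icc (0:ℝ) (1-s), (a + b*s + c*t + d*s^2 + e*t^2 + f*(s*t)))
      = (a + c/2 + e/3) + (-a + b - c + f/2 - e)*s + (-b + d + c/2 - f + e)*s^2
        + (-d + f/2 - e/3)*s^3 + 0*s^4 := by
    intro s hs
    rw [integral_Icc_eq_integral_Ioc,
      ← intervalIntegral.integral_of_le (by have := hs.2; linarith : (0:ℝ) ≤ 1-s)]
    rw [show (fun t => a + b*s + c*t + d*s^2 + e*t^2 + f*(s*t))
        = (fun t => (a + b*s + d*s^2) + (c + f*s)*t + e*t^2 + 0*t^3 + 0*t^4) from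
      funext fun t => by ring]
    rw [int_poly4]
    ring
  rw [setIntegral_congr_fun measurableSet_Icc key]
  rw [integral_Icc_eq_integral_Ioc, ← intervalIntegral.integral_of_le (zero_le_one)]
  rw [int_poly4]
  ring

private noncomputable def Phi : EuclideanSpace ℝ (Fin 2) ≃ᵐ ℝ × ℝ :=
  (MeasurableEquiv.toLp 2 (Fin 2 → ℝ)).symm.trans (MeasurableEquiv.finTwoArrow)


private lemma measurePreserving_Phi : MeasurePreserving Phi := by
  have h := (volume_preserving_finTwoArrow ℝ).comp
    (EuclideanSpace.volume_preserving_symm_measurableEquiv_toLp (Fin 2))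
  exact h

private lemma transfer (g : ℝ → ℝ → ℝ) :
    ∫ x in (Phi ⁻¹' Tri), g (x 0) (x 1) = ∫ z in Tri, g z.1 z.2 :=
  measurePreserving_Phi.setIntegral_preimage_emb Phi.measurableEmbedding
    (fun z => g z.1 z.2) Tri


private noncomputable def Lmap (e1 e2 : EuclideanSpace ℝ (Fin 2)) :
    EuclideanSpace ℝ (Fin 2) →L[ℝ] EuclideanSpace ℝ (Fin 2) :=
  LinearMap.toContinuousLinearMap
    { toFun := fun x => x 0 • e1 + x 1 • e2
      map_add' := fun x y => by
        dsimp only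
        have h0 : (x + y) 0 = x 0 + y 0 := rfl
        have h1 : (x + y) 1 = x 1 + y 1 := rfl
        rw [h0, h1, add_smul, add_smul]; abel
      map_smul' := fun c x => by
        dsimp only
        have h0 : (c • x) 0 = c * x 0 := rfl
        have h1 : (c • x) 1 = c * x 1 := rfl
        rw [h0, h1, RingHom.id_apply, smul_add, mul_smul, mul_smul] }

private lemma Lmap_apply (e1 e2 x : EuclideanSpace ℝ (Fin 2)) :
    Lmap e1 e2 x = x 0 • e1 + x 1 • e2 := by
  simp [Lmap]

private lemma Lmap_det (e1 e2 : EuclideanSpace ℝ (Fin 2)) :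
    (Lmap e1 e2).det = e1 0 * e2 1 - e1 1 * e2 0 := by
  classical
  have hcoe : ((Lmap e1 e2 : EuclideanSpace ℝ (Fin 2) →L[ℝ] EuclideanSpace ℝ (Fin 2)) :
      EuclideanSpace ℝ (Fin 2) →ₗ[ℝ] EuclideanSpace ℝ (Fin 2)) =
      { toFun := fun x => x 0 • e1 + x 1 • e2
        map_add' := fun x y => by
          dsimp only
          have h0 : (x + y) 0 = x 0 + y 0 := rfl
          have h1 : (x + y) 1 = x 1 + y 1 := rfl
          rw [h0, h1, add_smul, add_smul]; abel
        map_smul' := fun c x => by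
          dsimp only
          have h0 : (c • x) 0 = c * x 0 := rfl
          have h1 : (c • x) 1 = c * x 1 := rfl
          rw [h0, h1, RingHom.id_apply, smul_add, mul_smul, mul_smul] } :=
    LinearMap.coe_toContinuousLinearMap _
  show LinearMap.det _ = _
  rw [hcoe]
  let b := (EuclideanSpace.basisFun (Fin 2) ℝ).toBasis
  rw [← LinearMap.det_toMatrix b]
  rw [Matrix.det_fin_two]
  simp [LinearMap.toMatrix_apply, b, EuclideanSpace.basisFun_repr,
    EuclideanSpace.basisFun_apply, EuclideanSpace.single_apply, LinearMap.coe_mk, AddHom.coe_mk]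
  ring

private lemma inner_expand (e1 e2 : EuclideanSpace ℝ (Fin 2)) (s t s' t' : ℝ) :
    ⟪s • e1 + t • e2, s' • e1 + t' • e2⟫ =
      (s * s') * ⟪e1, e1⟫ + (s * t' + s' * t) * ⟪e1, e2⟫ + (t * t') * ⟪e2, e2⟫ := by
  simp only [inner_add_left, inner_add_right, real_inner_smul_left, real_inner_smul_right]
  rw [real_inner_comm e2 e1]
  ring

private def Delta : Set (EuclideanSpace ℝ (Fin 2)) := Phi ⁻¹' Tri

private lemma measurableSet_Delta : MeasurableSet Delta :=
  Phi.measurable measurableSet_Tri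

private lemma convex_Delta : Convex ℝ Delta := by
  intro x hx y hy a b ha hb hab
  have hx0 : (0:ℝ) ≤ x 0 := hx.1
  have hx1 : (0:ℝ) ≤ x 1 := hx.2.1
  have hx2 : x 0 + x 1 ≤ 1 := hx.2.2
  have hy0 : (0:ℝ) ≤ y 0 := hy.1
  have hy1 : (0:ℝ) ≤ y 1 := hy.2.1
  have hy2 : y 0 + y 1 ≤ 1 := hy.2.2
  refine ⟨?_, ?_, ?_⟩
  · show (0:ℝ) ≤ a * x 0 + b * y 0
    nlinarith
  · show (0:ℝ) ≤ a * x 1 + b * y 1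
    nlinarith
  · show (a * x 0 + b * y 0) + (a * x 1 + b * y 1) ≤ 1
    nlinarith

private lemma transfer' (g : ℝ → ℝ → ℝ) :
    ∫ x in Delta, g (x 0) (x 1) = ∫ z in Tri, g z.1 z.2 :=
  measurePreserving_Phi.setIntegral_preimage_emb Phi.measurableEmbedding
    (fun z => g z.1 z.2) Tri
set_option maxHeartbeats 1000000 in
/-- For a nondegenerate triangle `K` in `ℝ²`, the sum of the three principal
`2×2` minors of the local Raviart–Thomas mass matrix `G_K` equals
`1/12 + (9/4)·(ρ_K²/|K|)²`. -/
theorem stmt_7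
    (W : Fin 3 → EuclideanSpace ℝ (Fin 2)) (hW : AffineIndependent ℝ W)
    (K : Set (EuclideanSpace ℝ (Fin 2))) (hK : K = convexHull ℝ (Set.range W))
    (A : ℝ) (hA : A = (volume K).toReal)
    (G : EuclideanSpace ℝ (Fin 2)) (hG : G = (3 : ℝ)⁻¹ • (W 0 + W 1 + W 2))
    (ρsq : ℝ) (hρ : ρsq = (1 / A) * ∫ x in K, ‖x - G‖ ^ 2)
    (φ : Fin 3 → EuclideanSpace ℝ (Fin 2) → EuclideanSpace ℝ (Fin 2))
    (hφ : ∀ i x, φ i x = (2 * A)⁻¹ • (x - W i))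
    (GK : Matrix (Fin 3) (Fin 3) ℝ)
    (hGK : ∀ i j : Fin 3, GK i j = ∫ x in K, ⟪φ i x, φ j x⟫) :
    (∑ i : Fin 3, (GK i i * GK (i + 1) (i + 1) - GK i (i + 1) ^ 2)) =
      1 / 12 + (9 / 4) * (ρsq / A) ^ 2 := by
  classical
  obtain ⟨e1, he1⟩ : ∃ v, v = W 1 - W 0 := ⟨_, rfl⟩
  obtain ⟨e2, he2⟩ : ∃ v, v = W 2 - W 0 := ⟨_, rfl⟩
  have hW1e : W 1 = W 0 + e1 := by rw [he1]; abel
  have hW2e : W 2 = W 0 + e2 := by rw [he2]; abel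
  obtain ⟨P, hPd⟩ : ∃ c : ℝ, c = ⟪e1, e1⟫ := ⟨_, rfl⟩
  obtain ⟨Q, hQd⟩ : ∃ c : ℝ, c = ⟪e1, e2⟫ := ⟨_, rfl⟩
  obtain ⟨R, hRd⟩ : ∃ c : ℝ, c = ⟪e2, e2⟫ := ⟨_, rfl⟩
  obtain ⟨D, hDd⟩ : ∃ c : ℝ, c = e1 0 * e2 1 - e1 1 * e2 0 := ⟨_, rfl⟩
  -- D ≠ 0 from affine independence
  have hkey : ∀ lam mu : ℝ, lam * e1 0 + mu * e2 0 = 0 → lam * e1 1 + mu * e2 1 = 0 →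
      lam = 0 ∧ mu = 0 := by
    intro lam mu hc0 hc1
    have hv : lam • e1 + mu • e2 = (0 : EuclideanSpace ℝ (Fin 2)) := by
      ext i
      fin_cases i
      · simpa using hc0
      · simpa using hc1
    have hsum : ∑ i : Fin 3, (![-(lam + mu), lam, mu]) i = 0 := by
      rw [Fin.sum_univ_three]
      simp only [Matrix.cons_val_zero, Matrix.cons_val_one, Matrix.head_cons,
        Matrix.cons_val_two, Matrix.tail_cons]
      ring
    have hcomb : ∑ i : Fin 3, (![-(lam + mu), lam, mu]) i • W i = 0 := by
      rw [Fin.sum_univ_three]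
      simp only [Matrix.cons_val_zero, Matrix.cons_val_one, Matrix.head_cons,
        Matrix.cons_val_two, Matrix.tail_cons]
      rw [hW1e, hW2e,
        show -(lam + mu) • W 0 + lam • (W 0 + e1) + mu • (W 0 + e2) = lam • e1 + mu • e2 by
          module]
      exact hv
    have hz := affineIndependent_iff.mp hW Finset.univ (![-(lam + mu), lam, mu]) hsum hcomb
    constructor
    · simpa using hz 1 (Finset.mem_univ 1)
    · simpa using hz 2 (Finset.mem_univ 2)
  have hD : D ≠ 0 := by
    intro hD0
    have hD0' : e1 0 * e2 1 - e1 1 * e2 0 = 0 := hDd.symm.trans hD0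
    by_cases ha : e1 0 ≠ 0
    · exact ha (hkey (-(e2 0)) (e1 0) (by ring) (by linear_combination hD0')).2
    · by_cases hb : e1 1 ≠ 0
      · exact hb (hkey (-(e2 1)) (e1 1) (by linear_combination -hD0') (by ring)).2
      · push_neg at ha hb
        have := (hkey 1 0 (by rw [ha]; ring) (by rw [hb]; ring)).1
        norm_num at this
  have habs : |D| ≠ 0 := abs_ne_zero.mpr hD
  -- the affine parametrization
  obtain ⟨F, hF⟩ : ∃ F : EuclideanSpace ℝ (Fin 2) → EuclideanSpace ℝ (Fin 2),
      F = fun x => W 0 + Lmap e1 e2 x := ⟨_, rfl⟩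
  have hdet : (Lmap e1 e2).det = D := by rw [Lmap_det]; exact hDd.symm
  have hΔm : MeasurableSet Delta := measurableSet_Delta
  have hDF : ∀ x ∈ Delta, HasFDerivWithinAt F (Lmap e1 e2) Delta x := by
    intro x _
    rw [hF]
    exact (((Lmap e1 e2).hasFDerivAt).const_add (W 0)).hasFDerivWithinAt
  have hInj : Set.InjOn F Delta := by
    intro x _ y _ hxy
    have hL : Lmap e1 e2 x = Lmap e1 e2 y := by
      rw [hF] at hxy
      exact add_left_cancel hxy
    rw [Lmap_apply, Lmap_apply] at hL
    have h0 : x 0 * e1 0 + x 1 * e2 0 = y 0 * e1 0 + y 1 * e2 0 := by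
      have := congrArg (fun v : EuclideanSpace ℝ (Fin 2) => v 0) hL
      simpa using this
    have h1 : x 0 * e1 1 + x 1 * e2 1 = y 0 * e1 1 + y 1 * e2 1 := by
      have := congrArg (fun v : EuclideanSpace ℝ (Fin 2) => v 1) hL
      simpa using this
    have hx0 : x 0 = y 0 := by
      have hmul : (x 0 - y 0) * D = 0 := by
        rw [hDd]; linear_combination e2 1 * h0 - e2 0 * h1
      rcases mul_eq_zero.mp hmul with h | h
      · linarith
      · exact absurd h hD
    have hx1 : x 1 = y 1 := by
      have hmul : (x 1 - y 1) * D = 0 := by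
        rw [hDd]; linear_combination e1 0 * h1 - e1 1 * h0
      rcases mul_eq_zero.mp hmul with h | h
      · linarith
      · exact absurd h hD
    ext i
    fin_cases i
    · exact hx0
    · exact hx1
  -- K is the image of Delta
  have hmk : ∀ s t : ℝ, ∃ v : EuclideanSpace ℝ (Fin 2), v 0 = s ∧ v 1 = t := by
    intro s t
    exact ⟨(WithLp.equiv 2 (Fin 2 → ℝ)).symm ![s, t], by simp, by simp⟩
  have himg : F '' Delta ⊆ K := by
    rintro - ⟨v, hv, rfl⟩
    rw [hK]
    have hv0 : (0:ℝ) ≤ v 0 := hv.1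
    have hv1 : (0:ℝ) ≤ v 1 := hv.2.1
    have hv2 : v 0 + v 1 ≤ 1 := hv.2.2
    have hsum1 : ∑ i : Fin 3, (![1 - v 0 - v 1, v 0, v 1]) i = 1 := by
      rw [Fin.sum_univ_three]
      simp only [Matrix.cons_val_zero, Matrix.cons_val_one, Matrix.head_cons,
        Matrix.cons_val_two, Matrix.tail_cons]
      ring
    have hmem := Finset.centerMass_mem_convexHull (Finset.univ : Finset (Fin 3))
      (w := ![1 - v 0 - v 1, v 0, v 1]) (z := W)
      (by
        intro i _
        fin_cases i
        · show (0:ℝ) ≤ 1 - v 0 - v 1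
          linarith
        · show (0:ℝ) ≤ v 0
          exact hv0
        · show (0:ℝ) ≤ v 1
          exact hv1)
      (by rw [hsum1]; norm_num)
      (fun i _ => Set.mem_range_self i)
    rw [Finset.centerMass_eq_of_sum_1 _ _ hsum1] at hmem
    have hFv : F v = ∑ i : Fin 3, (![1 - v 0 - v 1, v 0, v 1]) i • W i := by
      rw [Fin.sum_univ_three]
      simp only [Matrix.cons_val_zero, Matrix.cons_val_one, Matrix.head_cons,
        Matrix.cons_val_two, Matrix.tail_cons]
      rw [hF]
      show W 0 + Lmap e1 e2 v = _
      rw [Lmap_apply, hW1e, hW2e]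
      module
    rw [hFv]
    exact hmem
  have hsub : K ⊆ F '' Delta := by
    rw [hK]
    apply convexHull_min
    · rintro - ⟨i, rfl⟩
      fin_cases i
      · obtain ⟨v, hv0, hv1⟩ := hmk 0 0
        refine ⟨v, ⟨by show (0:ℝ) ≤ v 0; simp [hv0], by show (0:ℝ) ≤ v 1; simp [hv1],
          by show v 0 + v 1 ≤ 1; simp [hv0, hv1]⟩, ?_⟩
        rw [hF]
        show W 0 + Lmap e1 e2 v = W 0
        rw [Lmap_apply, hv0, hv1]
        simp
      · obtain ⟨v, hv0, hv1⟩ := hmk 1 0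
        refine ⟨v, ⟨by show (0:ℝ) ≤ v 0; simp [hv0], by show (0:ℝ) ≤ v 1; simp [hv1],
          by show v 0 + v 1 ≤ 1; simp [hv0, hv1]⟩, ?_⟩
        rw [hF]
        show W 0 + Lmap e1 e2 v = W 1
        rw [Lmap_apply, hv0, hv1, hW1e]
        simp
      · obtain ⟨v, hv0, hv1⟩ := hmk 0 1
        refine ⟨v, ⟨by show (0:ℝ) ≤ v 0; simp [hv0], by show (0:ℝ) ≤ v 1; simp [hv1],
          by show v 0 + v 1 ≤ 1; simp [hv0, hv1]⟩, ?_⟩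
        rw [hF]
        show W 0 + Lmap e1 e2 v = W 2
        rw [Lmap_apply, hv0, hv1, hW2e]
        simp
    · rw [hF, ← Set.image_image (fun z => W 0 + z) (fun x => Lmap e1 e2 x)]
      refine Convex.translate ?_ (W 0)
      have := convex_Delta.linear_image ((Lmap e1 e2 : _ →L[ℝ] _) :
        EuclideanSpace ℝ (Fin 2) →ₗ[ℝ] EuclideanSpace ℝ (Fin 2))
      simpa using this
  have hKF : K = F '' Delta := le_antisymm hsub himg
  -- change of variables
  have hCOV : ∀ gg : EuclideanSpace ℝ (Fin 2) → ℝ,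
      ∫ x in K, gg x = |D| * ∫ x in Delta, gg (F x) := by
    intro gg
    rw [hKF, integral_image_eq_integral_abs_det_fderiv_smul volume hΔm hDF hInj gg]
    simp only [hdet, smul_eq_mul]
    rw [integral_const_mul]
  have hKint : ∀ (gg : EuclideanSpace ℝ (Fin 2) → ℝ) (g : ℝ → ℝ → ℝ),
      (∀ x : EuclideanSpace ℝ (Fin 2), gg (F x) = g (x 0) (x 1)) →
      ∫ x in K, gg x = |D| * ∫ z in Tri, g z.1 z.2 := by
    intro gg g hg
    rw [hCOV gg, ← transfer' g]
    congr 1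
    exact setIntegral_congr_fun hΔm fun x _ => hg x
  -- the master integral computation
  have main : ∀ (Z1 Z2 : EuclideanSpace ℝ (Fin 2)) (a1 b1 a2 b2 : ℝ),
      Z1 = W 0 + a1 • e1 + b1 • e2 → Z2 = W 0 + a2 • e1 + b2 • e2 →
      (∫ x in K, ⟪x - Z1, x - Z2⟫) =
      |D| * ((a1*a2*P + (a1*b2+a2*b1)*Q + b1*b2*R)/2
        + ((-(a1+a2)*P - (b1+b2)*Q) + (-(a1+a2)*Q - (b1+b2)*R))/6 + (P+R)/12 + (2*Q)/24) := by
    intro Z1 Z2 a1 b1 a2 b2 hZ1 hZ2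
    rw [hKint (fun x => ⟪x - Z1, x - Z2⟫)
      (fun s t => (a1*a2*P + (a1*b2+a2*b1)*Q + b1*b2*R)
        + (-(a1+a2)*P - (b1+b2)*Q)*s + (-(a1+a2)*Q - (b1+b2)*R)*t
        + P*s^2 + R*t^2 + (2*Q)*(s*t))
      (by
        intro x
        dsimp only
        have h1 : F x - Z1 = (x 0 - a1) • e1 + (x 1 - b1) • e2 := by
          rw [hF, hZ1]
          show W 0 + Lmap e1 e2 x - _ = _
          rw [Lmap_apply]
          module
        have h2 : F x - Z2 = (x 0 - a2) • e1 + (x 1 - b2) • e2 := by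
          rw [hF, hZ2]
          show W 0 + Lmap e1 e2 x - _ = _
          rw [Lmap_apply]
          module
        rw [h1, h2, inner_expand, ← hPd, ← hQd, ← hRd]
        ring)]
    rw [tri_moment]
  -- area
  have hA2 : A = |D| / 2 := by
    have h1 : (∫ x in K, (1:ℝ)) = A := by
      rw [hA, setIntegral_const, smul_eq_mul, mul_one]; rfl
    have h2 : (∫ x in K, (1:ℝ)) = |D| *
        ((1:ℝ)/2 + (0+0)/6 + (0+0)/12 + 0/24) := by
      rw [hKint (fun _ => (1:ℝ))
        (fun s t => 1 + 0*s + 0*t + 0*s^2 + 0*t^2 + 0*(s*t)) (fun x => by norm_num)]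
      rw [tri_moment]
    rw [← h1, h2]
    ring
  -- gyration radius
  have hGe : G = W 0 + (3⁻¹:ℝ) • e1 + (3⁻¹:ℝ) • e2 := by
    rw [hG, hW1e, hW2e]
    module
  have hρval : ρsq = (P + R - Q) / 18 := by
    have hGint := main G G 3⁻¹ 3⁻¹ 3⁻¹ 3⁻¹ hGe hGe
    have hnorm : (∫ x in K, ‖x - G‖ ^ 2) = ∫ x in K, ⟪x - G, x - G⟫ := by
      refine integral_congr_ae (Filter.Eventually.of_forall fun x => ?_)
      exact (real_inner_self_eq_norm_sq (x - G)).symm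
    rw [hρ, hnorm, hGint, hA2]
    field_simp
    ring
  -- GK entries
  have hGK2 : ∀ i j : Fin 3, GK i j =
      (2*A)⁻¹ * ((2*A)⁻¹ * ∫ x in K, ⟪x - W i, x - W j⟫) := by
    intro i j
    rw [hGK]
    simp_rw [hφ, real_inner_smul_left, real_inner_smul_right]
    rw [integral_const_mul, integral_const_mul]
  have hp0 : W 0 = W 0 + (0:ℝ) • e1 + (0:ℝ) • e2 := by module
  have hp1 : W 1 = W 0 + (1:ℝ) • e1 + (0:ℝ) • e2 := by rw [hW1e]; module
  have hp2 : W 2 = W 0 + (0:ℝ) • e1 + (1:ℝ) • e2 := by rw [hW2e]; module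
  have m00 := main (W 0) (W 0) 0 0 0 0 hp0 hp0
  have m11 := main (W 1) (W 1) 1 0 1 0 hp1 hp1
  have m22 := main (W 2) (W 2) 0 1 0 1 hp2 hp2
  have m01 := main (W 0) (W 1) 0 0 1 0 hp0 hp1
  have m12 := main (W 1) (W 2) 1 0 0 1 hp1 hp2
  have m20 := main (W 2) (W 0) 0 1 0 0 hp2 hp0
  have g00 : GK 0 0 = ((P+Q+R)/12) / |D| := by
    rw [hGK2 0 0, m00, hA2]; field_simp; ring
  have g11 : GK 1 1 = ((3*P-3*Q+R)/12) / |D| := by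
    rw [hGK2 1 1, m11, hA2]; field_simp; ring
  have g22 : GK 2 2 = ((P-3*Q+3*R)/12) / |D| := by
    rw [hGK2 2 2, m22, hA2]; field_simp; ring
  have g01 : GK 0 1 = ((R-P-Q)/12) / |D| := by
    rw [hGK2 0 1, m01, hA2]; field_simp; ring
  have g12 : GK 1 2 = ((3*Q-P-R)/12) / |D| := by
    rw [hGK2 1 2, m12, hA2]; field_simp; ring
  have g20 : GK 2 0 = ((P-Q-R)/12) / |D| := by
    rw [hGK2 2 0, m20, hA2]; field_simp; ring
  -- determinant identity
  have hip11 : ⟪e1, e1⟫ = e1 0 * e1 0 + e1 1 * e1 1 := by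
    rw [PiLp.inner_apply, Fin.sum_univ_two]; simp; ring
  have hip12 : ⟪e1, e2⟫ = e1 0 * e2 0 + e1 1 * e2 1 := by
    rw [PiLp.inner_apply, Fin.sum_univ_two]; simp; ring
  have hip22 : ⟪e2, e2⟫ = e2 0 * e2 0 + e2 1 * e2 1 := by
    rw [PiLp.inner_apply, Fin.sum_univ_two]; simp; ring
  have habs2 : |D|^2 = P*R - Q^2 := by
    rw [sq_abs, hDd, hPd, hQd, hRd, hip11, hip12, hip22]
    ring
  have hPRne : P*R - Q^2 ≠ 0 := by
    rw [← habs2]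
    exact pow_ne_zero 2 habs
  have key : ∀ u v w : ℝ, u/|D| * (v/|D|) - (w/|D|)^2 = (u*v - w^2)/(P*R - Q^2) := by
    intro u v w
    rw [← habs2]
    field_simp
  rw [Fin.sum_univ_three]
  simp only [show (0:Fin 3)+1 = 1 from rfl, show (1:Fin 3)+1 = 2 from rfl,
    show (2:Fin 3)+1 = 0 from rfl]
  rw [g00, g11, g22, g01, g12, g20, hρval, hA2]
  rw [key, key, key]
  have hrhs : (9:ℝ)/4 * (((P+R-Q)/18)/(|D|/2))^2 = (P+R-Q)^2/(36*(P*R-Q^2)) := by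
    rw [div_pow, div_pow, div_pow, habs2]
    field_simp
    ring
  rw [hrhs]
  field_simp
  ring
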